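/- arXiv:2410.03656 — 3 statements merged into one kernel-verified Lean document; each statement's English description precedes it below -/
import Mathlib

section
/- For t ≥ 3, every resolving set S of M_t with |S ∩ V_2| = t − 1 satisfies |S| ≥ t − 1 + 2^{t−1}. -/
open SimpleGraph Function Sum Finset
open scoped Classical

/-- A set `S` is a resolving set of `G`: every pair of distinct vertices differ in
distance to some element of `S`. -/
def IsResolving {V : Type*} (G : SimpleGraph V) (S : Set V) : Prop :=
  ∀ x y : V, x ≠ y → ∃ s ∈ S, G.dist s x ≠ G.dist s y

/-- A fault-tolerant resolving set: removing any single vertex leaves a resolving set. -/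
def IsFTResolving {V : Type*} (G : SimpleGraph V) (S : Set V) : Prop :=
  ∀ s ∈ S, IsResolving G (S \ {s})

/-- The metric dimension of `G`. -/
noncomputable def metricDim {V : Type*} [Fintype V] (G : SimpleGraph V) : ℕ :=
  sInf {n | ∃ S : Finset V, IsResolving G ↑S ∧ S.card = n}

/-- The fault-tolerant metric dimension of `G`. -/
noncomputable def ftDim {V : Type*} [Fintype V] (G : SimpleGraph V) : ℕ :=
  sInf {n | ∃ S : Finset V, IsFTResolving G ↑S ∧ S.card = n}

/-- `S` is a `k`-resolving set: every pair of distinct vertices is distinguished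
by at least `k` vertices of `S`. -/
def IsKResolving {V : Type*} [Fintype V] (G : SimpleGraph V) (k : ℕ) (S : Finset V) : Prop :=
  ∀ x y : V, x ≠ y → k ≤ (S.filter (fun s => G.dist s x ≠ G.dist s y)).card

/-- The `k`-metric dimension of `G`. -/
noncomputable def kMetricDim {V : Type*} [Fintype V] (G : SimpleGraph V) (k : ℕ) : ℕ :=
  sInf {n | ∃ S : Finset V, IsKResolving G k S ∧ S.card = n}

/-- The graph `M_t`: a clique on all binary strings of length `t`, together with
independent vertices `v_1, …, v_t`, where `v_i` is adjacent to exactly those strings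
having `1` (`true`) at coordinate `i`. -/
def Mt (t : ℕ) : SimpleGraph ((Fin t → Bool) ⊕ Fin t) where
  Adj x y :=
    match x, y with
    | Sum.inl u, Sum.inl v => u ≠ v
    | Sum.inl u, Sum.inr i => u i = true
    | Sum.inr i, Sum.inl u => u i = true
    | Sum.inr _, Sum.inr _ => False
  symm := by
    constructor
    rintro (u | i) (v | j) h
    · exact h.symm
    · exact h
    · exact h
    · exact h
  loopless := by
    constructor
    rintro (u | i) h
    · exact h rfl
    · exact h

lemma dist_ll {t : ℕ} {u v : Fin t → Bool} (h : u ≠ v) :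
    (Mt t).dist (inl u) (inl v) = 1 := by
  rw [SimpleGraph.dist_eq_one_iff_adj]; exact h

lemma dist_rl_true {t : ℕ} {i : Fin t} {u : Fin t → Bool} (h : u i = true) :
    (Mt t).dist (inr i) (inl u) = 1 := by
  rw [SimpleGraph.dist_eq_one_iff_adj]; exact h

lemma dist_rl_false {t : ℕ} {i : Fin t} {u : Fin t → Bool} (h : u i = false) :
    (Mt t).dist (inr i) (inl u) = 2 := by
  have hadj1 : (Mt t).Adj (inr i) (inl (Function.update u i true)) := by
    show Function.update u i true i = true; simp
  have hadj2 : (Mt t).Adj (inl (Function.update u i true)) (inl u) := by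
    show Function.update u i true ≠ u
    intro he
    have := congrFun he i
    simp [h] at this
  let w : (Mt t).Walk (inr i) (inl u) := hadj1.toWalk.append hadj2.toWalk
  have hle : (Mt t).dist (inr i) (inl u) ≤ 2 := by
    have hw : w.length = 2 := by simp [w]
    have := SimpleGraph.dist_le w
    omega
  have hne1 : (Mt t).dist (inr i) (inl u) ≠ 1 := by
    intro h1
    have : (Mt t).Adj (inr i) (inl u) := SimpleGraph.dist_eq_one_iff_adj.mp h1
    have : u i = true := this
    simp [h] at this
  have hne0 : (Mt t).dist (inr i) (inl u) ≠ 0 := by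
    have hr : (Mt t).Reachable (inr i) (inl u) := ⟨w⟩
    simp [SimpleGraph.dist_eq_zero_iff_eq_or_not_reachable, hr]
  omega

theorem stmt8 (t : ℕ) (ht : 3 ≤ t) (S : Finset ((Fin t → Bool) ⊕ Fin t))
    (hS : IsResolving (Mt t) ↑S)
    (hV2 : (S.filter (fun x => x.isRight = true)).card = t - 1) :
    t - 1 + 2 ^ (t - 1) ≤ S.card := by
  -- the set of right indices in S
  set T : Finset (Fin t) := univ.filter (fun i => inr i ∈ S) with hT
  clear_value T
  have hTcard : T.card = t - 1 := by
    rw [← hV2]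
    apply Finset.card_bij (fun i _ => inr i)
    · intro i hi
      simp only [hT, mem_filter, mem_univ, true_and] at hi
      simp [hi]
    · intro a ha b hb h
      simpa using h
    · intro x hx
      simp only [mem_filter] at hx
      obtain ⟨hx1, hx2⟩ := hx
      rcases x with u | i
      · simp at hx2
      · exact ⟨i, by simp [hT, hx1], rfl⟩
  -- find k with inr k ∉ S
  have hTne : T ≠ univ := by
    intro h
    have := Finset.card_univ (α := Fin t)
    rw [h] at hTcard
    simp [Finset.card_univ] at hTcard
    omega
  obtain ⟨k, hk⟩ : ∃ k, k ∉ T := by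
    by_contra h
    push_neg at h
    exact hTne (Finset.eq_univ_of_forall h)
  -- the pairs
  set P : Finset (Fin t → Bool) := univ.filter (fun u => u k = false) with hP
  clear_value P
  have hPcard : P.card = 2 ^ (t - 1) := by
    rw [hP]
    have hsplit := Finset.card_filter_add_card_filter_not
      (s := (univ : Finset (Fin t → Bool))) (p := fun u => u k = false)
    have hbij : (univ.filter (fun u : Fin t → Bool => u k = false)).card =
        (univ.filter (fun u : Fin t → Bool => ¬ (u k = false))).card := by
      apply Finset.card_bij (fun u _ => Function.update u k true)
      · intro u hu; simp
      · intro a ha b hb h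
        simp only [mem_filter, mem_univ, true_and] at ha hb
        funext i
        by_cases hik : i = k
        · subst hik; rw [ha, hb]
        · have := congrFun h i
          simpa [Function.update, hik] using this
      · intro w hw
        simp only [mem_filter, mem_univ, true_and, Bool.not_eq_false] at hw
        refine ⟨Function.update w k false, by simp, ?_⟩
        funext i
        by_cases hik : i = k
        · subst hik; simp [hw]
        · simp [Function.update, hik]
    have hcard : (univ : Finset (Fin t → Bool)).card = 2 ^ t := by
      simp [Finset.card_univ]
    have ht2 : 2 ^ t = 2 ^ (t - 1) * 2 := by
      have h' : t - 1 + 1 = t := Nat.sub_add_cancel (le_trans (by norm_num) ht)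
      conv_lhs => rw [← h']
      rw [pow_succ]
    rw [← hbij] at hsplit
    rw [hcard, ht2, ← mul_two] at hsplit
    exact Nat.eq_of_mul_eq_mul_right (by norm_num) hsplit
  -- key claim
  have key : ∀ u ∈ P, inl u ∈ S ∨ inl (Function.update u k true) ∈ S := by
    intro u hu
    simp only [hP, mem_filter, mem_univ, true_and] at hu
    by_contra h
    push_neg at h
    obtain ⟨h1, h2⟩ := h
    set u' := Function.update u k true with hu'
    have hne : u ≠ u' := by
      intro he
      have := congrFun he k
      simp [hu', hu] at this
    obtain ⟨s, hsS, hsd⟩ := hS (inl u) (inl u') (by simpa using hne)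
    rcases s with z | i
    · have hz1 : z ≠ u := fun he => h1 (he ▸ hsS)
      have hz2 : z ≠ u' := fun he => h2 (he ▸ hsS)
      rw [dist_ll hz1, dist_ll hz2] at hsd
      exact hsd rfl
    · have hiT : i ∈ T := by
        simp only [hT, mem_filter, mem_univ, true_and]
        exact Finset.mem_coe.mp hsS
      have hik : i ≠ k := fun he => hk (he ▸ hiT)
      have heq : u i = u' i := by simp [hu', Function.update, hik]
      cases hui : u i
      · have hui' : u' i = false := by rw [← heq]; exact hui
        rw [dist_rl_false hui, dist_rl_false hui'] at hsd
        exact hsd rfl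
      · have hui' : u' i = true := by rw [← heq]; exact hui
        rw [dist_rl_true hui, dist_rl_true hui'] at hsd
        exact hsd rfl
  -- injection from P into left part of S
  set L : Finset (Fin t → Bool) := univ.filter (fun u => inl u ∈ S) with hL
  clear_value L
  have hPL : P.card ≤ L.card := by
    apply Finset.card_le_card_of_injOn
      (fun u => if inl u ∈ S then u else Function.update u k true)
    · intro u hu
      rcases key u hu with h | h
      · simp [hL, h]
      · by_cases h' : inl u ∈ S
        · simp [hL, h']
        · simp [hL, h', h]
    · intro a ha b hb h
      simp only [hP, Finset.coe_filter, Set.mem_setOf_eq, mem_univ, true_and] at ha hb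
      by_cases h1 : inl a ∈ S <;> by_cases h2 : inl b ∈ S <;>
        simp only [h1, h2, if_pos, if_neg, if_true, if_false] at h
      · exact h
      · exfalso
        have := congrFun h k
        simp [ha, hb] at this
      · exfalso
        have := congrFun h k
        simp [ha, hb] at this
      · funext i
        by_cases hik : i = k
        · subst hik; rw [ha, hb]
        · have := congrFun h i
          simpa [Function.update, hik] using this
  -- conclude
  have hLS : L.card ≤ (S.filter (fun x => ¬ (x.isRight = true))).card := by
    apply Finset.card_le_card_of_injOn (fun u => inl u)
    · intro u hu
      simp only [hL, mem_coe, mem_filter, mem_univ, true_and] at hu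
      simp [mem_filter, hu]
    · intro a _ b _ h
      simpa using h
  have hsum := Finset.card_filter_add_card_filter_not
    (s := S) (p := fun x => x.isRight = true)
  omega
end

section
/- For t ≥ 3, every resolving set S of M_t with |S ∩ V_2| ≤ t − 2 satisfies |S| ≥ 3·2^{t−2}. -/
open SimpleGraph Function
open scoped Classical

lemma Mt_adj_ll {t : ℕ} {u v : Fin t → Bool} : (Mt t).Adj (Sum.inl u) (Sum.inl v) ↔ u ≠ v := Iff.rfl
lemma Mt_adj_rl {t : ℕ} {k : Fin t} {u : Fin t → Bool} : (Mt t).Adj (Sum.inr k) (Sum.inl u) ↔ u k = true := Iff.rfl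

lemma Mt_dist_ll {t : ℕ} {u v : Fin t → Bool} (h : u ≠ v) :
    (Mt t).dist (Sum.inl u) (Sum.inl v) = 1 :=
  SimpleGraph.dist_eq_one_iff_adj.2 (Mt_adj_ll.2 h)

lemma Mt_dist_rl_false {t : ℕ} {k : Fin t} {u : Fin t → Bool} (h : u k = false) :
    (Mt t).dist (Sum.inr k) (Sum.inl u) = 2 := by
  set w : Fin t → Bool := Function.update u k true with hw
  have hwk : w k = true := by simp [hw]
  have hwu : w ≠ u := by
    intro he
    rw [he] at hwk
    simp [h] at hwk
  have a1 : (Mt t).Adj (Sum.inr k) (Sum.inl w) := Mt_adj_rl.2 hwk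
  have a2 : (Mt t).Adj (Sum.inl w) (Sum.inl u) := Mt_adj_ll.2 hwu
  have p : (Mt t).Walk (Sum.inr k) (Sum.inl u) := (a1.toWalk.append a2.toWalk)
  have hle : (Mt t).dist (Sum.inr k) (Sum.inl u) ≤ 2 := by
    have := SimpleGraph.dist_le (a1.toWalk.append a2.toWalk)
    simpa using this
  have hne1 : (Mt t).dist (Sum.inr k) (Sum.inl u) ≠ 1 := by
    intro hd
    have := SimpleGraph.dist_eq_one_iff_adj.1 hd
    rw [Mt_adj_rl] at this
    simp [h] at this
  have hne0 : (Mt t).dist (Sum.inr k) (Sum.inl u) ≠ 0 := by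
    rw [SimpleGraph.dist_ne_zero_iff_ne_and_reachable]
    exact ⟨by simp, ⟨p⟩⟩
  omega

theorem stmt9 (t : ℕ) (ht : 3 ≤ t) (S : Finset ((Fin t → Bool) ⊕ Fin t))
    (hS : IsResolving (Mt t) ↑S)
    (hV2 : (S.filter (fun x => x.isRight = true)).card ≤ t - 2) :
    3 * 2 ^ (t - 2) ≤ S.card := by
  -- indices in S
  set R : Finset (Fin t) := Finset.univ.filter (fun k => Sum.inr k ∈ S) with hR
  have hRcard : R.card ≤ t - 2 := by
    refine le_trans ?_ hV2
    apply Finset.card_le_card_of_injOn (fun k => Sum.inr k)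
    · intro k hk
      simp only [hR, Finset.mem_coe, Finset.mem_filter] at hk
      simp [hk.2]
    · intro a _ b _ h
      exact Sum.inr.inj h
  -- two missing indices
  have hcompl : 2 ≤ (Finset.univ \ R).card := by
    have := Finset.card_sdiff_add_card_eq_card (Finset.subset_univ R)
    have hcu : (Finset.univ : Finset (Fin t)).card = t := by simp
    omega
  obtain ⟨i, hi, j, hj, hij⟩ := Finset.one_lt_card.1 (by omega : 1 < (Finset.univ \ R).card)
  have hiS : Sum.inr i ∉ S := by
    simp only [hR, Finset.mem_sdiff, Finset.mem_filter] at hi; tauto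
  have hjS : Sum.inr j ∉ S := by
    simp only [hR, Finset.mem_sdiff, Finset.mem_filter] at hj; tauto
  -- key: strings not in S are injective under restriction away from i, j
  set B : Finset (Fin t → Bool) := Finset.univ.filter (fun u => Sum.inl u ∉ S) with hB
  have hkey : ∀ u ∈ B, ∀ v ∈ B, u ≠ v →
      ∃ k : Fin t, k ≠ i ∧ k ≠ j ∧ u k ≠ v k := by
    intro u hu v hv huv
    by_contra hcon
    push_neg at hcon
    obtain ⟨s, hsS, hsd⟩ := hS (Sum.inl u) (Sum.inl v) (by simp [huv])
    simp only [hB, Finset.mem_filter] at hu hv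
    rcases s with w | k
    · have hwu : w ≠ u := fun h => hu.2 (h ▸ hsS)
      have hwv : w ≠ v := fun h => hv.2 (h ▸ hsS)
      rw [Mt_dist_ll hwu, Mt_dist_ll hwv] at hsd
      exact hsd rfl
    · have hki : k ≠ i := fun h => hiS (h ▸ hsS)
      have hkj : k ≠ j := fun h => hjS (h ▸ hsS)
      have heq : u k = v k := by
        by_contra h
        exact h (by_contra fun h' => h' (hcon k hki hkj))
      rcases hvk : v k with _ | _
      · rw [Mt_dist_rl_false (heq.trans hvk), Mt_dist_rl_false hvk] at hsd
        exact hsd rfl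
      · have d1 : (Mt t).dist (Sum.inr k) (Sum.inl u) = 1 :=
          SimpleGraph.dist_eq_one_iff_adj.2 (Mt_adj_rl.2 (heq.trans hvk))
        have d2 : (Mt t).dist (Sum.inr k) (Sum.inl v) = 1 :=
          SimpleGraph.dist_eq_one_iff_adj.2 (Mt_adj_rl.2 hvk)
        rw [d1, d2] at hsd
        exact hsd rfl
  -- B injects into functions on Fin t \ {i, j}
  have hBcard : B.card ≤ 2 ^ (t - 2) := by
    have hinj : Set.InjOn (fun (u : Fin t → Bool) => fun (k : {k : Fin t // k ≠ i ∧ k ≠ j}) => u k.1) B := by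
      intro u hu v hv h
      by_contra huv
      obtain ⟨k, hki, hkj, hk⟩ := hkey u hu v hv huv
      exact hk (congrFun h ⟨k, hki, hkj⟩)
    calc B.card ≤ (Finset.univ : Finset ({k : Fin t // k ≠ i ∧ k ≠ j} → Bool)).card :=
          Finset.card_le_card_of_injOn _ (fun _ _ => Finset.mem_univ _) hinj
      _ = 2 ^ (t - 2) := by
          rw [Finset.card_univ, Fintype.card_fun, Fintype.card_bool]
          congr 1
          rw [Fintype.card_subtype]
          have : (Finset.univ.filter (fun k : Fin t => k ≠ i ∧ k ≠ j)) = Finset.univ \ {i, j} := by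
            ext k; simp [and_comm]
          rw [this, Finset.card_sdiff_of_subset (by simp), Finset.card_insert_of_notMem (by simp [hij]),
            Finset.card_singleton]
          simp
  -- A = strings in S
  set A : Finset (Fin t → Bool) := Finset.univ.filter (fun u => Sum.inl u ∈ S) with hA
  have hAB : A.card + B.card = 2 ^ t := by
    have := Finset.card_filter_add_card_filter_not
      (s := (Finset.univ : Finset (Fin t → Bool))) (p := fun u => Sum.inl u ∈ S)
    simpa [hA, hB, Fintype.card_fun] using this
  have hAS : A.card ≤ S.card := by
    apply Finset.card_le_card_of_injOn (fun u => Sum.inl u)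
    · intro u hu
      simp only [hA, Finset.mem_coe, Finset.mem_filter] at hu
      exact hu.2
    · intro a _ b _ h
      exact Sum.inl.inj h
  have h2t : 2 ^ t = 4 * 2 ^ (t - 2) := by
    obtain ⟨m, hm⟩ : ∃ m, t = m + 2 := ⟨t - 2, by omega⟩
    subst hm
    rw [Nat.add_sub_cancel, pow_add]
    ring
  omega
end

section
/- For every k ≥ 2 and every sufficiently large t, dim_{k+1}(M_{t,k}) ≥ 2^{t−1}; hence there exist graphs in which the (k+1)-metric dimension is exponential in the k-metric dimension. -/
open SimpleGraph Function
open scoped Classical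

/-- The graph `M_{t,k}`: a clique on all binary strings of length `t`, together with the
vertices `v_{i,j}` of `K_t □ K_k` (adjacent iff they agree in exactly one coordinate),
where `v_{i,j}` is adjacent to exactly those strings having `1` at coordinate `i`. -/
def Mtk (t k : ℕ) : SimpleGraph ((Fin t → Bool) ⊕ (Fin t × Fin k)) where
  Adj x y :=
    match x, y with
    | Sum.inl u, Sum.inl v => u ≠ v
    | Sum.inl u, Sum.inr p => u p.1 = true
    | Sum.inr p, Sum.inl u => u p.1 = true
    | Sum.inr p, Sum.inr q => (p.1 = q.1 ∧ p.2 ≠ q.2) ∨ (p.1 ≠ q.1 ∧ p.2 = q.2)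
  symm := by
    refine ⟨?_⟩
    rintro (u | p) (v | q) h
    · exact h.symm
    · exact h
    · exact h
    · rcases h with ⟨h1, h2⟩ | ⟨h1, h2⟩
      · exact Or.inl ⟨h1.symm, h2.symm⟩
      · exact Or.inr ⟨h1.symm, h2.symm⟩
  loopless := by
    refine ⟨?_⟩
    rintro (u | p) h
    · exact h rfl
    · rcases h with ⟨_, h2⟩ | ⟨h1, _⟩
      · exact h2 rfl
      · exact h1 rfl

-- generic dist = 2 lemma
lemma dist_eq_two' {V : Type*} (G : SimpleGraph V) {a b : V} (hne : a ≠ b)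
    (hadj : ¬ G.Adj a b) (c : V) (h1 : G.Adj a c) (h2 : G.Adj c b) : G.dist a b = 2 := by
  have hle : G.dist a b ≤ 2 := by
    have := SimpleGraph.dist_le (Walk.cons h1 (Walk.cons h2 Walk.nil))
    simpa using this
  have h0 : G.dist a b ≠ 0 := by
    rw [SimpleGraph.dist_ne_zero_iff_ne_and_reachable]
    exact ⟨hne, (Walk.cons h1 (Walk.cons h2 Walk.nil)).reachable⟩
  have h1' : G.dist a b ≠ 1 := fun h => hadj (SimpleGraph.dist_eq_one_iff_adj.mp h)
  omega

section MtkLemmas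
variable {t k : ℕ}

lemma mtk_adj_ll {u v : Fin t → Bool} :
    (Mtk t k).Adj (Sum.inl u) (Sum.inl v) ↔ u ≠ v := Iff.rfl
lemma mtk_adj_lr {u : Fin t → Bool} {p : Fin t × Fin k} :
    (Mtk t k).Adj (Sum.inl u) (Sum.inr p) ↔ u p.1 = true := Iff.rfl
lemma mtk_adj_rl {u : Fin t → Bool} {p : Fin t × Fin k} :
    (Mtk t k).Adj (Sum.inr p) (Sum.inl u) ↔ u p.1 = true := Iff.rfl
lemma mtk_adj_rr {p q : Fin t × Fin k} :
    (Mtk t k).Adj (Sum.inr p) (Sum.inr q) ↔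
      (p.1 = q.1 ∧ p.2 ≠ q.2) ∨ (p.1 ≠ q.1 ∧ p.2 = q.2) := Iff.rfl

lemma mtk_dist_ll {u v : Fin t → Bool} (h : u ≠ v) :
    (Mtk t k).dist (Sum.inl u) (Sum.inl v) = 1 :=
  SimpleGraph.dist_eq_one_iff_adj.mpr (mtk_adj_ll.mpr h)

lemma mtk_dist_lr (u : Fin t → Bool) (p : Fin t × Fin k) :
    (Mtk t k).dist (Sum.inl u) (Sum.inr p) = if u p.1 = true then 1 else 2 := by
  split_ifs with h
  · exact SimpleGraph.dist_eq_one_iff_adj.mpr (mtk_adj_lr.mpr h)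
  · have hf : u p.1 = false := by simpa using h
    apply dist_eq_two' (Mtk t k) (by simp) (by rw [mtk_adj_lr]; simp [hf])
      (Sum.inl (Function.update u p.1 true))
    · rw [mtk_adj_ll]
      intro he
      have := congrFun he p.1
      simp [hf] at this
    · rw [mtk_adj_lr]
      simp

lemma mtk_dist_rl (u : Fin t → Bool) (p : Fin t × Fin k) :
    (Mtk t k).dist (Sum.inr p) (Sum.inl u) = if u p.1 = true then 1 else 2 := by
  rw [SimpleGraph.dist_comm, mtk_dist_lr]

lemma mtk_dist_rr_one {p q : Fin t × Fin k}
    (h : (p.1 = q.1 ∧ p.2 ≠ q.2) ∨ (p.1 ≠ q.1 ∧ p.2 = q.2)) :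
    (Mtk t k).dist (Sum.inr p) (Sum.inr q) = 1 :=
  SimpleGraph.dist_eq_one_iff_adj.mpr (mtk_adj_rr.mpr h)

lemma mtk_dist_rr_two {p q : Fin t × Fin k} (h1 : p.1 ≠ q.1) (h2 : p.2 ≠ q.2) :
    (Mtk t k).dist (Sum.inr p) (Sum.inr q) = 2 := by
  apply dist_eq_two' (Mtk t k) (by simp [Prod.ext_iff]; tauto)
    (by rw [mtk_adj_rr]; tauto) (Sum.inl (fun _ => true))
  · rw [mtk_adj_rl]
  · rw [mtk_adj_lr]

-- counting lemma
lemma card_filter_half (ht1 : 1 ≤ t) (i : Fin t) (p : (Fin t → Bool) → Prop) [DecidablePred p]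
    (hp : ∀ z, p (Function.update z i (!z i)) ↔ ¬ p z) :
    (Finset.univ.filter p).card = 2 ^ (t - 1) := by
  classical
  set fl : (Fin t → Bool) → (Fin t → Bool) := fun z => Function.update z i (!z i) with hfl
  have hinv : ∀ z, fl (fl z) = z := by
    intro z
    funext j
    by_cases hj : j = i
    · subst hj; simp [fl]
    · simp [fl, Function.update_of_ne hj]
  have hcard : (Finset.univ.filter p).card = (Finset.univ.filter (fun z => ¬ p z)).card := by
    apply Finset.card_nbij' fl fl
    · intro a ha
      simp only [Finset.coe_filter, Set.mem_setOf_eq, Finset.mem_filter, Finset.mem_univ, true_and] at ha ⊢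
      rw [hp a]; exact fun h => h ha
    · intro a ha
      simp only [Finset.coe_filter, Set.mem_setOf_eq, Finset.mem_filter, Finset.mem_univ, true_and, not_not] at ha ⊢
      exact (hp a).mpr ha
    · intro a _; exact hinv a
    · intro a _; exact hinv a
  have hsum := Finset.card_filter_add_card_filter_not (s := (Finset.univ : Finset (Fin t → Bool))) (p := p)
  have huniv : (Finset.univ : Finset (Fin t → Bool)).card = 2 ^ t := by
    simp [Fintype.card_fun]
  have h2t : 2 ^ t = 2 * 2 ^ (t - 1) := by
    conv_lhs => rw [show t = (t-1) + 1 by omega]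
    ring
  omega

lemma card_bit_false (ht1 : 1 ≤ t) (i : Fin t) :
    (Finset.univ.filter (fun z : Fin t → Bool => z i = false)).card = 2 ^ (t - 1) := by
  apply card_filter_half ht1 i
  intro z
  simp only [Function.update_self]
  cases hz : z i <;> simp

lemma card_bit_ne (ht1 : 1 ≤ t) {i i' : Fin t} (h : i ≠ i') :
    (Finset.univ.filter (fun z : Fin t → Bool => z i ≠ z i')).card = 2 ^ (t - 1) := by
  apply card_filter_half ht1 i
  intro z
  rw [Function.update_self, Function.update_of_ne (Ne.symm h)]
  cases hz : z i <;> cases hz' : z i' <;> simp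

-- key lemma: a (k+1)-resolving set contains inl u or inl (update u i0 true)
lemma key_lemma {S : Finset ((Fin t → Bool) ⊕ (Fin t × Fin k))}
    (hS : IsKResolving (Mtk t k) (k + 1) S) (i0 : Fin t) (u : Fin t → Bool)
    (hu : u i0 = false) :
    Sum.inl u ∈ S ∨ Sum.inl (Function.update u i0 true) ∈ S := by
  by_contra hc
  push_neg at hc
  obtain ⟨hc1, hc2⟩ := hc
  set w : Fin t → Bool := Function.update u i0 true with hw
  have huw : u ≠ w := by
    intro he
    have := congrFun he i0
    simp [w, hu] at this
  have hfilt := hS (Sum.inl u) (Sum.inl w) (by simp [huw])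
  have hsub : (S.filter (fun s => (Mtk t k).dist s (Sum.inl u) ≠ (Mtk t k).dist s (Sum.inl w)))
      ⊆ (Finset.univ : Finset (Fin k)).image (fun j => (Sum.inr (i0, j) : (Fin t → Bool) ⊕ (Fin t × Fin k))) := by
    intro s hs
    rw [Finset.mem_filter] at hs
    obtain ⟨hsS, hd⟩ := hs
    match s with
    | Sum.inl x =>
      exfalso
      by_cases hxu : x = u
      · exact hc1 (hxu ▸ hsS)
      by_cases hxw : x = w
      · exact hc2 (hxw ▸ hsS)
      · exact hd (by rw [mtk_dist_ll hxu, mtk_dist_ll hxw])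
    | Sum.inr p =>
      have hp1 : p.1 = i0 := by
        by_contra hne
        apply hd
        rw [mtk_dist_rl, mtk_dist_rl, hw, Function.update_of_ne hne]
      simp only [Finset.mem_image, Finset.mem_univ, true_and]
      exact ⟨p.2, by rw [← hp1]⟩
  have hle := Finset.card_le_card hsub
  have him : ((Finset.univ : Finset (Fin k)).image
      (fun j => (Sum.inr (i0, j) : (Fin t → Bool) ⊕ (Fin t × Fin k)))).card ≤ k := by
    calc _ ≤ (Finset.univ : Finset (Fin k)).card := Finset.card_image_le
    _ = k := by simp
  omega

-- the universal set is (k+1)-resolving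
lemma univ_kresolving (hk : 2 ≤ k) (ht : k + 3 < t) :
    IsKResolving (Mtk t k) (k + 1) (Finset.univ : Finset ((Fin t → Bool) ⊕ (Fin t × Fin k))) := by
  have ht1 : 1 ≤ t := by omega
  have hpow : k + 1 ≤ 2 ^ (t - 1) := by
    have := Nat.lt_two_pow_self (n := t - 1)
    omega
  intro x y hxy
  have hmono : ∀ D : Finset ((Fin t → Bool) ⊕ (Fin t × Fin k)),
      (∀ s ∈ D, (Mtk t k).dist s x ≠ (Mtk t k).dist s y) → k + 1 ≤ D.card →
      k + 1 ≤ (Finset.univ.filter (fun s => (Mtk t k).dist s x ≠ (Mtk t k).dist s y)).card := by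
    intro D hD hcard
    refine le_trans hcard (Finset.card_le_card ?_)
    intro s hs
    rw [Finset.mem_filter]
    exact ⟨Finset.mem_univ s, hD s hs⟩
  match x, y with
  | Sum.inl u, Sum.inl w =>
    have huw : u ≠ w := by simpa using hxy
    obtain ⟨i, hi⟩ := Function.ne_iff.mp huw
    apply hmono (insert (Sum.inl u) (insert (Sum.inl w)
      ((Finset.univ : Finset (Fin k)).image (fun j => Sum.inr (i, j)))))
    · intro s hs
      simp only [Finset.mem_insert, Finset.mem_image, Finset.mem_univ, true_and] at hs
      rcases hs with rfl | rfl | ⟨j, rfl⟩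
      · rw [SimpleGraph.dist_self, mtk_dist_ll huw]; omega
      · rw [SimpleGraph.dist_self, SimpleGraph.dist_comm, mtk_dist_ll huw]; omega
      · rw [mtk_dist_rl, mtk_dist_rl]
        cases hu : u i <;> cases hw : w i <;> simp_all
    · rw [Finset.card_insert_of_notMem, Finset.card_insert_of_notMem,
        Finset.card_image_of_injective]
      · simp only [Finset.card_univ, Fintype.card_fin]; omega
      · intro a b hab; simpa [Prod.ext_iff] using hab
      · simp
      · simp only [Finset.mem_insert, Finset.mem_image]
        push_neg
        exact ⟨by simpa using huw, by simp⟩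
  | Sum.inl u, Sum.inr p =>
    apply hmono ((Finset.univ.filter (fun z : Fin t → Bool => z p.1 = false)).image Sum.inl)
    · intro s hs
      simp only [Finset.mem_image, Finset.mem_filter, Finset.mem_univ, true_and] at hs
      obtain ⟨z, hz, rfl⟩ := hs
      rw [mtk_dist_lr]
      simp only [hz]
      by_cases hzu : z = u
      · subst hzu; rw [SimpleGraph.dist_self]; simp
      · rw [mtk_dist_ll hzu]; simp
    · rw [Finset.card_image_of_injective _ Sum.inl_injective, card_bit_false ht1]
      exact hpow
  | Sum.inr p, Sum.inl u =>
    apply hmono ((Finset.univ.filter (fun z : Fin t → Bool => z p.1 = false)).image Sum.inl)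
    · intro s hs
      simp only [Finset.mem_image, Finset.mem_filter, Finset.mem_univ, true_and] at hs
      obtain ⟨z, hz, rfl⟩ := hs
      rw [mtk_dist_lr]
      simp only [hz]
      by_cases hzu : z = u
      · subst hzu; rw [SimpleGraph.dist_self]; simp
      · rw [mtk_dist_ll hzu]; simp
    · rw [Finset.card_image_of_injective _ Sum.inl_injective, card_bit_false ht1]
      exact hpow
  | Sum.inr p, Sum.inr q =>
    have hpq : p ≠ q := by simpa using hxy
    by_cases h1 : p.1 = q.1
    · have h2 : p.2 ≠ q.2 := fun h2 => hpq (Prod.ext h1 h2)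
      apply hmono (insert (Sum.inr p) (insert (Sum.inr q)
        ((Finset.univ.filter (fun a : Fin t => a ≠ p.1)).image (fun a => Sum.inr (a, p.2)))))
      · intro s hs
        simp only [Finset.mem_insert, Finset.mem_image, Finset.mem_filter, Finset.mem_univ,
          true_and] at hs
        rcases hs with rfl | rfl | ⟨a, ha, rfl⟩
        · rw [SimpleGraph.dist_self, mtk_dist_rr_one (Or.inl ⟨h1, h2⟩)]; omega
        · rw [SimpleGraph.dist_self, SimpleGraph.dist_comm,
            mtk_dist_rr_one (Or.inl ⟨h1, h2⟩)]; omega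
        · rw [mtk_dist_rr_one (p := (a, p.2)) (q := p) (Or.inr ⟨ha, rfl⟩),
            mtk_dist_rr_two (p := (a, p.2)) (q := q) (by simp only []; rw [← h1]; exact ha) h2]
          omega
      · have hq : (Sum.inr q : (Fin t → Bool) ⊕ (Fin t × Fin k)) ∉
            (Finset.univ.filter (fun a : Fin t => a ≠ p.1)).image (fun a => Sum.inr (a, p.2)) := by
          simp only [Finset.mem_image, Finset.mem_filter, Finset.mem_univ, true_and]
          push_neg
          intro a ha he
          rw [Sum.inr.injEq, Prod.ext_iff] at he
          exact h2 he.2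
        have hp : (Sum.inr p : (Fin t → Bool) ⊕ (Fin t × Fin k)) ∉ insert (Sum.inr q)
            ((Finset.univ.filter (fun a : Fin t => a ≠ p.1)).image (fun a => Sum.inr (a, p.2))) := by
          simp only [Finset.mem_insert, Finset.mem_image, Finset.mem_filter, Finset.mem_univ,
            true_and]
          push_neg
          refine ⟨by simpa using hpq, ?_⟩
          intro a ha he
          rw [Sum.inr.injEq, Prod.ext_iff] at he
          exact ha he.1
        rw [Finset.card_insert_of_notMem hp, Finset.card_insert_of_notMem hq,
          Finset.card_image_of_injective _ (fun a b hab => by simpa [Prod.ext_iff] using hab),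
          Finset.filter_ne', Finset.card_erase_of_mem (Finset.mem_univ _)]
        simp only [Finset.card_univ, Fintype.card_fin]
        omega
    · apply hmono ((Finset.univ.filter (fun z : Fin t → Bool => z p.1 ≠ z q.1)).image Sum.inl)
      · intro s hs
        simp only [Finset.mem_image, Finset.mem_filter, Finset.mem_univ, true_and] at hs
        obtain ⟨z, hz, rfl⟩ := hs
        rw [mtk_dist_lr, mtk_dist_lr]
        cases h : z p.1 <;> cases h' : z q.1 <;> simp_all
      · rw [Finset.card_image_of_injective _ Sum.inl_injective, card_bit_ne ht1 h1]
        exact hpow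

theorem stmt19 (t k : ℕ) (hk : 2 ≤ k) (ht : k + 3 < t) :
    2 ^ (t - 1) ≤ kMetricDim (Mtk t k) (k + 1) := by
  have ht1 : 1 ≤ t := by omega
  set i0 : Fin t := ⟨0, by omega⟩ with hi0
  apply le_csInf
  · exact ⟨(Finset.univ : Finset ((Fin t → Bool) ⊕ (Fin t × Fin k))).card,
      Finset.univ, univ_kresolving hk ht, rfl⟩
  · rintro n ⟨S, hS, rfl⟩
    have hA : (Finset.univ.filter (fun u : Fin t → Bool => u i0 = false)).card = 2 ^ (t - 1) :=
      card_bit_false ht1 i0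
    rw [← hA]
    have hrec : ∀ u : Fin t → Bool, u i0 = false →
        ∃ x, (if Sum.inl u ∈ S then (Sum.inl u : (Fin t → Bool) ⊕ (Fin t × Fin k))
          else Sum.inl (Function.update u i0 true)) = Sum.inl x ∧
          Function.update x i0 false = u := by
      intro u hu
      split_ifs with h
      · exact ⟨u, rfl, Function.update_eq_self_iff.mpr hu.symm⟩
      · refine ⟨Function.update u i0 true, rfl, ?_⟩
        rw [Function.update_idem]
        exact Function.update_eq_self_iff.mpr hu.symm
    apply Finset.card_le_card_of_injOn
      (fun u => if Sum.inl u ∈ S then (Sum.inl u : (Fin t → Bool) ⊕ (Fin t × Fin k))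
        else Sum.inl (Function.update u i0 true))
    · intro u hu
      simp only [Finset.coe_filter, Set.mem_setOf_eq, Finset.mem_filter, Finset.mem_univ, true_and] at hu
      rcases key_lemma hS i0 u hu with h | h
      · simp [h]
      · dsimp only
        split_ifs with h'
        · exact h'
        · exact h
    · intro u1 h1 u2 h2 he
      simp only [Finset.coe_filter, Set.mem_setOf_eq, Finset.mem_univ, true_and] at h1 h2
      obtain ⟨x1, he1, hx1⟩ := hrec u1 h1
      obtain ⟨x2, he2, hx2⟩ := hrec u2 h2
      simp only at he
      rw [he1, he2, Sum.inl.injEq] at he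
      rw [← hx1, ← hx2, he]
end MtkLemmas
end
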